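/- For every even n ≥ 4, the sequence of star transpositions consisting of (1,2), followed by (1,4), (1,6), …, (1,n), followed by (1,2), (1,3), (1,4), …, (1,n), is a 2-reachability network on n elements. -/

import Mathlib

/-- The permutation of `ℕ` obtained by applying the transpositions in the list
in order (first element of the list applied first). -/
def netPerm (S : List (ℕ × ℕ)) : Equiv.Perm ℕ :=
  (S.map (fun p => Equiv.swap p.1 p.2)).reverse.prod

/-- `L` is a `t`-reachability network on the ground set `{1, …, n}`:
every entry is a transposition of two distinct points of `{1, …, n}`, and for every
choice of `t` distinct points `x 0, …, x (t-1)` of `{1, …, n}` there is a subsequence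
of `L` whose composition (applied in order) maps `j + 1` to `x j` for `0 ≤ j < t`
(i.e. maps the point `j` to `x_j` for `1 ≤ j ≤ t`). -/
def IsReachNet (n t : ℕ) (L : List (ℕ × ℕ)) : Prop :=
  (∀ p ∈ L, p.1 ∈ Finset.Icc 1 n ∧ p.2 ∈ Finset.Icc 1 n ∧ p.1 ≠ p.2) ∧
  ∀ x : Fin t → ℕ, (∀ j, x j ∈ Finset.Icc 1 n) → Function.Injective x →
    ∃ S : List (ℕ × ℕ), S.Sublist L ∧ ∀ j : Fin t, netPerm S (j.val + 1) = x j

/-- The sequence of star transpositions `(1,2)`, then `(1,4), (1,6), …, (1,n)`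
(even second coordinates, increasing), then `(1,2), (1,3), (1,4), …, (1,n)`. -/
def starSeqEven (n : ℕ) : List (ℕ × ℕ) :=
  ((1 : ℕ), (2 : ℕ)) ::
    (((List.range (n + 1)).filter (fun x => x % 2 = 0 ∧ 4 ≤ x)).map (fun x => ((1 : ℕ), x)) ++
     ((List.range (n + 1)).filter (fun x => 2 ≤ x)).map (fun x => ((1 : ℕ), x)))

set_option linter.unreachableTactic false
set_option linter.unusedTactic false

lemma netPerm_nil (k : ℕ) : netPerm [] k = k := rfl

lemma netPerm_cons' (c : ℕ) (S : List (ℕ × ℕ)) (k : ℕ) :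
    netPerm (((1 : ℕ), c) :: S) k = netPerm S (Equiv.swap 1 c k) := by
  simp [netPerm, List.reverse_cons, List.prod_append, Equiv.Perm.mul_apply]

lemma sublist_range' : ∀ (m s : ℕ) (l : List ℕ), List.Pairwise (· < ·) l →
    (∀ x ∈ l, s ≤ x ∧ x < s + m) → l.Sublist (List.range' s m) := by
  intro m
  induction m with
  | zero =>
    intro s l _ h
    cases l with
    | nil => simp
    | cons a t => exact absurd (h a (by simp)) (by omega)
  | succ m ih =>
    intro s l hs h
    rw [List.range'_succ]
    cases l with
    | nil => simp
    | cons a t =>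
      rcases eq_or_ne a s with rfl | hne
      · refine List.Sublist.cons₂ _ (ih (a+1) t hs.of_cons ?_)
        intro x hx
        have h1 := (h x (by simp [hx]))
        have h2 := List.rel_of_pairwise_cons hs hx
        omega
      · refine List.Sublist.cons _ (ih (s+1) (a :: t) hs ?_)
        intro x hx
        have h1 := h x hx
        rcases List.mem_cons.mp hx with rfl | hx'
        · omega
        · have h2 := List.rel_of_pairwise_cons hs hx'
          have := h a (by simp)
          omega

lemma sorted_sublist_range {l : List ℕ} {m : ℕ} (hs : List.Pairwise (· < ·) l)
    (hb : ∀ x ∈ l, x < m) : l.Sublist (List.range m) := by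
  rw [List.range_eq_range']
  exact sublist_range' m 0 l hs (fun x hx => ⟨Nat.zero_le _, by simpa using hb x hx⟩)

lemma sublist_filter_range {l : List ℕ} {m : ℕ} {P : ℕ → Bool}
    (hs : List.Pairwise (· < ·) l) (hb : ∀ x ∈ l, x < m) (hp : ∀ x ∈ l, P x = true) :
    l.Sublist ((List.range m).filter P) := by
  have h1 : l.filter P = l := List.filter_eq_self.mpr hp
  conv_lhs => rw [← h1]
  exact (sorted_sublist_range hs hb).filter P

lemma sublist_starSeqEven (n : ℕ) (l0 l1 l2 : List ℕ)
    (h0 : l0 = [] ∨ l0 = [2])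
    (hs1 : List.Pairwise (· < ·) l1) (h1 : ∀ x ∈ l1, x ≤ n ∧ x % 2 = 0 ∧ 4 ≤ x)
    (hs2 : List.Pairwise (· < ·) l2) (h2 : ∀ x ∈ l2, x ≤ n ∧ 2 ≤ x) :
    ((l0 ++ (l1 ++ l2)).map (fun x => ((1 : ℕ), x))).Sublist (starSeqEven n) := by
  have hE : (l1.map (fun x => ((1 : ℕ), x))).Sublist
      (((List.range (n + 1)).filter (fun x => x % 2 = 0 ∧ 4 ≤ x)).map (fun x => ((1 : ℕ), x))) := by
    refine List.Sublist.map _ (sublist_filter_range hs1 (fun x hx => by have := h1 x hx; omega) ?_)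
    intro x hx
    have := h1 x hx
    simp only [decide_eq_true_eq]
    omega
  have hB : (l2.map (fun x => ((1 : ℕ), x))).Sublist
      (((List.range (n + 1)).filter (fun x => 2 ≤ x)).map (fun x => ((1 : ℕ), x))) := by
    refine List.Sublist.map _ (sublist_filter_range hs2 (fun x hx => by have := h2 x hx; omega) ?_)
    intro x hx
    have := h2 x hx
    simp only [decide_eq_true_eq]
    omega
  have hEB := hE.append hB
  rw [← List.map_append] at hEB
  rcases h0 with rfl | rfl
  · simpa [starSeqEven] using List.Sublist.cons (((1:ℕ),(2:ℕ))) hEB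
  · simpa [starSeqEven] using List.Sublist.cons₂ (((1:ℕ),(2:ℕ))) hEB

lemma exists_net (n : ℕ) (hn : 4 ≤ n) (hpar : n % 2 = 0) (a b : ℕ)
    (ha : 1 ≤ a) (ha' : a ≤ n) (hb : 1 ≤ b) (hb' : b ≤ n) (hab : a ≠ b) :
    ∃ S : List (ℕ × ℕ), S.Sublist (starSeqEven n) ∧ netPerm S 1 = a ∧ netPerm S 2 = b := by
  by_cases ha1 : a = 1
  · by_cases hb2 : b = 2
    · -- case A
      refine ⟨(([] ++ ([] ++ [])).map (fun x => ((1:ℕ), x))), sublist_starSeqEven n _ _ _ (Or.inl rfl) (by simp) (by simp) (by simp) (by simp), ?_, ?_⟩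
      · simp only [List.cons_append, List.nil_append, List.map_cons, List.map_nil, netPerm_cons', netPerm_nil]
        all_goals omega
      · simp only [List.cons_append, List.nil_append, List.map_cons, List.map_nil, netPerm_cons', netPerm_nil]
        all_goals omega
    · by_cases hbe : b % 2 = 0
      · -- case B
        refine ⟨(([(2:ℕ)] ++ ([(b:ℕ)] ++ [(2:ℕ)])).map (fun x => ((1:ℕ), x))), sublist_starSeqEven n _ _ _ (Or.inr rfl) (by simp) (by intro x hx; simp at hx; omega) (by simp) (by intro x hx; simp at hx; omega), ?_, ?_⟩
        · simp only [List.cons_append, List.nil_append, List.map_cons, List.map_nil, netPerm_cons', netPerm_nil]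
          rw [show Equiv.swap (1:ℕ) (2) (1:ℕ) = (2) from Equiv.swap_apply_left _ _]
          rw [show Equiv.swap (1:ℕ) (b) (2) = (2) from Equiv.swap_apply_of_ne_of_ne (by omega) (by omega)]
          rw [show Equiv.swap (1:ℕ) (2) (2) = (1:ℕ) from Equiv.swap_apply_right _ _]
          all_goals omega
        · simp only [List.cons_append, List.nil_append, List.map_cons, List.map_nil, netPerm_cons', netPerm_nil]
          rw [show Equiv.swap (1:ℕ) (2) (2) = (1:ℕ) from Equiv.swap_apply_right _ _]
          rw [show Equiv.swap (1:ℕ) (b) (1:ℕ) = (b) from Equiv.swap_apply_left _ _]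
          rw [show Equiv.swap (1:ℕ) (2) (b) = (b) from Equiv.swap_apply_of_ne_of_ne (by omega) (by omega)]
          all_goals omega
      · -- case C
        refine ⟨(([] ++ ([(n:ℕ)] ++ [(2:ℕ), (b:ℕ), (n:ℕ)])).map (fun x => ((1:ℕ), x))), sublist_starSeqEven n _ _ _ (Or.inl rfl) (by simp) (by intro x hx; simp at hx; omega) (by simp [List.pairwise_cons]; omega) (by intro x hx; simp at hx; omega), ?_, ?_⟩
        · simp only [List.cons_append, List.nil_append, List.map_cons, List.map_nil, netPerm_cons', netPerm_nil]
          rw [show Equiv.swap (1:ℕ) (n) (1:ℕ) = (n) from Equiv.swap_apply_left _ _]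
          rw [show Equiv.swap (1:ℕ) (2) (n) = (n) from Equiv.swap_apply_of_ne_of_ne (by omega) (by omega)]
          rw [show Equiv.swap (1:ℕ) (b) (n) = (n) from Equiv.swap_apply_of_ne_of_ne (by omega) (by omega)]
          rw [show Equiv.swap (1:ℕ) (n) (n) = (1:ℕ) from Equiv.swap_apply_right _ _]
          all_goals omega
        · simp only [List.cons_append, List.nil_append, List.map_cons, List.map_nil, netPerm_cons', netPerm_nil]
          rw [show Equiv.swap (1:ℕ) (n) (2) = (2) from Equiv.swap_apply_of_ne_of_ne (by omega) (by omega)]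
          rw [show Equiv.swap (1:ℕ) (2) (2) = (1:ℕ) from Equiv.swap_apply_right _ _]
          rw [show Equiv.swap (1:ℕ) (b) (1:ℕ) = (b) from Equiv.swap_apply_left _ _]
          rw [show Equiv.swap (1:ℕ) (n) (b) = (b) from Equiv.swap_apply_of_ne_of_ne (by omega) (by omega)]
          all_goals omega
  · by_cases hb1 : b = 1
    · by_cases ha2 : a = 2
      · -- case D
        refine ⟨(([] ++ ([] ++ [(2:ℕ)])).map (fun x => ((1:ℕ), x))), sublist_starSeqEven n _ _ _ (Or.inl rfl) (by simp) (by simp) (by simp) (by intro x hx; simp at hx; omega), ?_, ?_⟩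
        · simp only [List.cons_append, List.nil_append, List.map_cons, List.map_nil, netPerm_cons', netPerm_nil]
          rw [show Equiv.swap (1:ℕ) (2) (1:ℕ) = (2) from Equiv.swap_apply_left _ _]
          all_goals omega
        · simp only [List.cons_append, List.nil_append, List.map_cons, List.map_nil, netPerm_cons', netPerm_nil]
          rw [show Equiv.swap (1:ℕ) (2) (2) = (1:ℕ) from Equiv.swap_apply_right _ _]
          all_goals omega
      · by_cases hae : a % 2 = 0
        · -- case E
          refine ⟨(([] ++ ([(a:ℕ)] ++ [(2:ℕ)])).map (fun x => ((1:ℕ), x))), sublist_starSeqEven n _ _ _ (Or.inl rfl) (by simp) (by intro x hx; simp at hx; omega) (by simp) (by intro x hx; simp at hx; omega), ?_, ?_⟩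
          · simp only [List.cons_append, List.nil_append, List.map_cons, List.map_nil, netPerm_cons', netPerm_nil]
            rw [show Equiv.swap (1:ℕ) (a) (1:ℕ) = (a) from Equiv.swap_apply_left _ _]
            rw [show Equiv.swap (1:ℕ) (2) (a) = (a) from Equiv.swap_apply_of_ne_of_ne (by omega) (by omega)]
            all_goals omega
          · simp only [List.cons_append, List.nil_append, List.map_cons, List.map_nil, netPerm_cons', netPerm_nil]
            rw [show Equiv.swap (1:ℕ) (a) (2) = (2) from Equiv.swap_apply_of_ne_of_ne (by omega) (by omega)]
            rw [show Equiv.swap (1:ℕ) (2) (2) = (1:ℕ) from Equiv.swap_apply_right _ _]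
            all_goals omega
        · -- case F
          refine ⟨(([(2:ℕ)] ++ ([(n:ℕ)] ++ [(2:ℕ), (a:ℕ), (n:ℕ)])).map (fun x => ((1:ℕ), x))), sublist_starSeqEven n _ _ _ (Or.inr rfl) (by simp) (by intro x hx; simp at hx; omega) (by simp [List.pairwise_cons]; omega) (by intro x hx; simp at hx; omega), ?_, ?_⟩
          · simp only [List.cons_append, List.nil_append, List.map_cons, List.map_nil, netPerm_cons', netPerm_nil]
            rw [show Equiv.swap (1:ℕ) (2) (1:ℕ) = (2) from Equiv.swap_apply_left _ _]
            rw [show Equiv.swap (1:ℕ) (n) (2) = (2) from Equiv.swap_apply_of_ne_of_ne (by omega) (by omega)]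
            rw [show Equiv.swap (1:ℕ) (2) (2) = (1:ℕ) from Equiv.swap_apply_right _ _]
            rw [show Equiv.swap (1:ℕ) (a) (1:ℕ) = (a) from Equiv.swap_apply_left _ _]
            rw [show Equiv.swap (1:ℕ) (n) (a) = (a) from Equiv.swap_apply_of_ne_of_ne (by omega) (by omega)]
            all_goals omega
          · simp only [List.cons_append, List.nil_append, List.map_cons, List.map_nil, netPerm_cons', netPerm_nil]
            rw [show Equiv.swap (1:ℕ) (2) (2) = (1:ℕ) from Equiv.swap_apply_right _ _]
            rw [show Equiv.swap (1:ℕ) (n) (1:ℕ) = (n) from Equiv.swap_apply_left _ _]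
            rw [show Equiv.swap (1:ℕ) (2) (n) = (n) from Equiv.swap_apply_of_ne_of_ne (by omega) (by omega)]
            rw [show Equiv.swap (1:ℕ) (a) (n) = (n) from Equiv.swap_apply_of_ne_of_ne (by omega) (by omega)]
            rw [show Equiv.swap (1:ℕ) (n) (n) = (1:ℕ) from Equiv.swap_apply_right _ _]
            all_goals omega
    · by_cases hb2 : b = 2
      · -- case G
        refine ⟨(([] ++ ([] ++ [(a:ℕ)])).map (fun x => ((1:ℕ), x))), sublist_starSeqEven n _ _ _ (Or.inl rfl) (by simp) (by simp) (by simp) (by intro x hx; simp at hx; omega), ?_, ?_⟩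
        · simp only [List.cons_append, List.nil_append, List.map_cons, List.map_nil, netPerm_cons', netPerm_nil]
          rw [show Equiv.swap (1:ℕ) (a) (1:ℕ) = (a) from Equiv.swap_apply_left _ _]
          all_goals omega
        · simp only [List.cons_append, List.nil_append, List.map_cons, List.map_nil, netPerm_cons', netPerm_nil]
          rw [show Equiv.swap (1:ℕ) (a) (2) = (2) from Equiv.swap_apply_of_ne_of_ne (by omega) (by omega)]
          all_goals omega
      · by_cases ha2 : a = 2
        · -- case H
          refine ⟨(([] ++ ([] ++ [(2:ℕ), (b:ℕ)])).map (fun x => ((1:ℕ), x))), sublist_starSeqEven n _ _ _ (Or.inl rfl) (by simp) (by simp) (by simp [List.pairwise_cons]; omega) (by intro x hx; simp at hx; omega), ?_, ?_⟩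
          · simp only [List.cons_append, List.nil_append, List.map_cons, List.map_nil, netPerm_cons', netPerm_nil]
            rw [show Equiv.swap (1:ℕ) (2) (1:ℕ) = (2) from Equiv.swap_apply_left _ _]
            rw [show Equiv.swap (1:ℕ) (b) (2) = (2) from Equiv.swap_apply_of_ne_of_ne (by omega) (by omega)]
            all_goals omega
          · simp only [List.cons_append, List.nil_append, List.map_cons, List.map_nil, netPerm_cons', netPerm_nil]
            rw [show Equiv.swap (1:ℕ) (2) (2) = (1:ℕ) from Equiv.swap_apply_right _ _]
            rw [show Equiv.swap (1:ℕ) (b) (1:ℕ) = (b) from Equiv.swap_apply_left _ _]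
            all_goals omega
        · by_cases hae : a % 2 = 0
          · -- case I
            refine ⟨(([] ++ ([(a:ℕ)] ++ [(2:ℕ), (b:ℕ)])).map (fun x => ((1:ℕ), x))), sublist_starSeqEven n _ _ _ (Or.inl rfl) (by simp) (by intro x hx; simp at hx; omega) (by simp [List.pairwise_cons]; omega) (by intro x hx; simp at hx; omega), ?_, ?_⟩
            · simp only [List.cons_append, List.nil_append, List.map_cons, List.map_nil, netPerm_cons', netPerm_nil]
              rw [show Equiv.swap (1:ℕ) (a) (1:ℕ) = (a) from Equiv.swap_apply_left _ _]
              rw [show Equiv.swap (1:ℕ) (2) (a) = (a) from Equiv.swap_apply_of_ne_of_ne (by omega) (by omega)]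
              rw [show Equiv.swap (1:ℕ) (b) (a) = (a) from Equiv.swap_apply_of_ne_of_ne (by omega) (by omega)]
              all_goals omega
            · simp only [List.cons_append, List.nil_append, List.map_cons, List.map_nil, netPerm_cons', netPerm_nil]
              rw [show Equiv.swap (1:ℕ) (a) (2) = (2) from Equiv.swap_apply_of_ne_of_ne (by omega) (by omega)]
              rw [show Equiv.swap (1:ℕ) (2) (2) = (1:ℕ) from Equiv.swap_apply_right _ _]
              rw [show Equiv.swap (1:ℕ) (b) (1:ℕ) = (b) from Equiv.swap_apply_left _ _]
              all_goals omega
          · by_cases hbe : b % 2 = 0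
            · -- case J
              refine ⟨(([(2:ℕ)] ++ ([(b:ℕ)] ++ [(2:ℕ), (a:ℕ)])).map (fun x => ((1:ℕ), x))), sublist_starSeqEven n _ _ _ (Or.inr rfl) (by simp) (by intro x hx; simp at hx; omega) (by simp [List.pairwise_cons]; omega) (by intro x hx; simp at hx; omega), ?_, ?_⟩
              · simp only [List.cons_append, List.nil_append, List.map_cons, List.map_nil, netPerm_cons', netPerm_nil]
                rw [show Equiv.swap (1:ℕ) (2) (1:ℕ) = (2) from Equiv.swap_apply_left _ _]
                rw [show Equiv.swap (1:ℕ) (b) (2) = (2) from Equiv.swap_apply_of_ne_of_ne (by omega) (by omega)]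
                rw [show Equiv.swap (1:ℕ) (2) (2) = (1:ℕ) from Equiv.swap_apply_right _ _]
                rw [show Equiv.swap (1:ℕ) (a) (1:ℕ) = (a) from Equiv.swap_apply_left _ _]
                all_goals omega
              · simp only [List.cons_append, List.nil_append, List.map_cons, List.map_nil, netPerm_cons', netPerm_nil]
                rw [show Equiv.swap (1:ℕ) (2) (2) = (1:ℕ) from Equiv.swap_apply_right _ _]
                rw [show Equiv.swap (1:ℕ) (b) (1:ℕ) = (b) from Equiv.swap_apply_left _ _]
                rw [show Equiv.swap (1:ℕ) (2) (b) = (b) from Equiv.swap_apply_of_ne_of_ne (by omega) (by omega)]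
                rw [show Equiv.swap (1:ℕ) (a) (b) = (b) from Equiv.swap_apply_of_ne_of_ne (by omega) (by omega)]
                all_goals omega
            · by_cases hlt : a < b
              · -- case K
                refine ⟨(([(2:ℕ)] ++ ([(a+1:ℕ)] ++ [(2:ℕ), (a:ℕ), (a+1:ℕ), (b:ℕ)])).map (fun x => ((1:ℕ), x))), sublist_starSeqEven n _ _ _ (Or.inr rfl) (by simp) (by intro x hx; simp at hx; omega) (by simp [List.pairwise_cons]; omega) (by intro x hx; simp at hx; omega), ?_, ?_⟩
                · simp only [List.cons_append, List.nil_append, List.map_cons, List.map_nil, netPerm_cons', netPerm_nil]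
                  rw [show Equiv.swap (1:ℕ) (2) (1:ℕ) = (2) from Equiv.swap_apply_left _ _]
                  rw [show Equiv.swap (1:ℕ) (a+1) (2) = (2) from Equiv.swap_apply_of_ne_of_ne (by omega) (by omega)]
                  rw [show Equiv.swap (1:ℕ) (2) (2) = (1:ℕ) from Equiv.swap_apply_right _ _]
                  rw [show Equiv.swap (1:ℕ) (a) (1:ℕ) = (a) from Equiv.swap_apply_left _ _]
                  rw [show Equiv.swap (1:ℕ) (a+1) (a) = (a) from Equiv.swap_apply_of_ne_of_ne (by omega) (by omega)]
                  rw [show Equiv.swap (1:ℕ) (b) (a) = (a) from Equiv.swap_apply_of_ne_of_ne (by omega) (by omega)]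
                  all_goals omega
                · simp only [List.cons_append, List.nil_append, List.map_cons, List.map_nil, netPerm_cons', netPerm_nil]
                  rw [show Equiv.swap (1:ℕ) (2) (2) = (1:ℕ) from Equiv.swap_apply_right _ _]
                  rw [show Equiv.swap (1:ℕ) (a+1) (1:ℕ) = (a+1) from Equiv.swap_apply_left _ _]
                  rw [show Equiv.swap (1:ℕ) (2) (a+1) = (a+1) from Equiv.swap_apply_of_ne_of_ne (by omega) (by omega)]
                  rw [show Equiv.swap (1:ℕ) (a) (a+1) = (a+1) from Equiv.swap_apply_of_ne_of_ne (by omega) (by omega)]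
                  rw [show Equiv.swap (1:ℕ) (a+1) (a+1) = (1:ℕ) from Equiv.swap_apply_right _ _]
                  rw [show Equiv.swap (1:ℕ) (b) (1:ℕ) = (b) from Equiv.swap_apply_left _ _]
                  all_goals omega
              · -- case L
                refine ⟨(([] ++ ([(b+1:ℕ)] ++ [(2:ℕ), (b:ℕ), (b+1:ℕ), (a:ℕ)])).map (fun x => ((1:ℕ), x))), sublist_starSeqEven n _ _ _ (Or.inl rfl) (by simp) (by intro x hx; simp at hx; omega) (by simp [List.pairwise_cons]; omega) (by intro x hx; simp at hx; omega), ?_, ?_⟩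
                · simp only [List.cons_append, List.nil_append, List.map_cons, List.map_nil, netPerm_cons', netPerm_nil]
                  rw [show Equiv.swap (1:ℕ) (b+1) (1:ℕ) = (b+1) from Equiv.swap_apply_left _ _]
                  rw [show Equiv.swap (1:ℕ) (2) (b+1) = (b+1) from Equiv.swap_apply_of_ne_of_ne (by omega) (by omega)]
                  rw [show Equiv.swap (1:ℕ) (b) (b+1) = (b+1) from Equiv.swap_apply_of_ne_of_ne (by omega) (by omega)]
                  rw [show Equiv.swap (1:ℕ) (b+1) (b+1) = (1:ℕ) from Equiv.swap_apply_right _ _]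
                  rw [show Equiv.swap (1:ℕ) (a) (1:ℕ) = (a) from Equiv.swap_apply_left _ _]
                  all_goals omega
                · simp only [List.cons_append, List.nil_append, List.map_cons, List.map_nil, netPerm_cons', netPerm_nil]
                  rw [show Equiv.swap (1:ℕ) (b+1) (2) = (2) from Equiv.swap_apply_of_ne_of_ne (by omega) (by omega)]
                  rw [show Equiv.swap (1:ℕ) (2) (2) = (1:ℕ) from Equiv.swap_apply_right _ _]
                  rw [show Equiv.swap (1:ℕ) (b) (1:ℕ) = (b) from Equiv.swap_apply_left _ _]
                  rw [show Equiv.swap (1:ℕ) (b+1) (b) = (b) from Equiv.swap_apply_of_ne_of_ne (by omega) (by omega)]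
                  rw [show Equiv.swap (1:ℕ) (a) (b) = (b) from Equiv.swap_apply_of_ne_of_ne (by omega) (by omega)]
                  all_goals omega



/-- **Star construction for 2-reachability, even case.** For every even `n ≥ 4`, the
sequence `(1,2)`, `(1,4), (1,6), …, (1,n)`, `(1,2), (1,3), …, (1,n)` of star
transpositions is a 2-reachability network on `n` elements. -/
theorem starSeqEven_two_reachability (n : ℕ) (hn : 4 ≤ n) (hpar : Even n) :
    IsReachNet n 2 (starSeqEven n) ∧ ∀ p ∈ starSeqEven n, p.1 = 1 := by
  have hpar' : n % 2 = 0 := Nat.even_iff.mp hpar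
  refine ⟨⟨?_, ?_⟩, ?_⟩
  · intro p hp
    simp only [starSeqEven, List.mem_cons, List.mem_append, List.mem_map, List.mem_filter,
      List.mem_range, decide_eq_true_eq] at hp
    simp only [Finset.mem_Icc]
    rcases hp with rfl | ⟨x, hx, rfl⟩ | ⟨x, hx, rfl⟩ <;> simp <;> omega
  · intro x hx hinj
    have h0 := hx 0
    have h1 := hx 1
    simp only [Finset.mem_Icc] at h0 h1
    have hab : x 0 ≠ x 1 := fun h => absurd (hinj h) (by decide)
    obtain ⟨S, hS, e1, e2⟩ := exists_net n hn hpar' (x 0) (x 1) h0.1 h0.2 h1.1 h1.2 hab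
    refine ⟨S, hS, ?_⟩
    intro j
    fin_cases j
    · exact e1
    · exact e2
  · intro p hp
    simp only [starSeqEven, List.mem_cons, List.mem_append, List.mem_map, List.mem_filter,
      List.mem_range, decide_eq_true_eq] at hp
    rcases hp with rfl | ⟨x, hx, rfl⟩ | ⟨x, hx, rfl⟩ <;> rfl
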